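/- Let S be an orthogonal collection in a triangulated category D such that ⟨S⟩ is functorially finite, and suppose either S is an 𝕊_{-1}-subcategory or Hom(ΣS, S) = 0. If (X, Y) is an S-mutation pair, then Y equals the class of right mutations of objects of X, X equals the class of left mutations of objects of Y, and there is an equivalence of categories G : X → Y. -/

import Mathlib

open CategoryTheory CategoryTheory.Limits CategoryTheory.Pretriangulated

universe v u u₂

namespace SMSPaper

/-- Serre duality data on a `k`-linear category, encoded by trace maps. -/
structure SerreData (k : Type u₂) [Field k] (D : Type u) [Category.{v} D] [Preadditive D]
    [Linear k D] where
  F : D ⥤ D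
  isEquiv : F.IsEquivalence
  tr : (x : D) → (x ⟶ F.obj x) →ₗ[k] k
  comm : ∀ {x y : D} (f : x ⟶ y) (g : y ⟶ F.obj x), tr x (f ≫ g) = tr y (g ≫ F.map f)
  nondeg₁ : ∀ {x y : D} (f : x ⟶ y), (∀ g : y ⟶ F.obj x, tr x (f ≫ g) = 0) → f = 0
  nondeg₂ : ∀ {x y : D} (g : y ⟶ F.obj x), (∀ f : x ⟶ y, tr x (f ≫ g) = 0) → g = 0

variable {C : Type u} [Category.{v} C] [Preadditive C] [HasZeroObject C]
  [HasShift C ℤ] [∀ n : ℤ, (shiftFunctor C n).Additive] [Pretriangulated C]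

/-- `f : x ⟶ d` is a right `X`-approximation of `d`. -/
def IsRightApprox (X : Set C) {x d : C} (f : x ⟶ d) : Prop :=
  x ∈ X ∧ ∀ s ∈ X, ∀ g : s ⟶ d, ∃ h : s ⟶ x, h ≫ f = g

/-- `f : d ⟶ x` is a left `X`-approximation of `d`. -/
def IsLeftApprox (X : Set C) {d x : C} (f : d ⟶ x) : Prop :=
  x ∈ X ∧ ∀ s ∈ X, ∀ g : d ⟶ s, ∃ h : x ⟶ s, f ≫ h = g

def RightMinimal {x d : C} (f : x ⟶ d) : Prop :=
  ∀ g : x ⟶ x, g ≫ f = f → IsIso g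

def LeftMinimal {d x : C} (f : d ⟶ x) : Prop :=
  ∀ g : x ⟶ x, f ≫ g = f → IsIso g

def IsMinimalRightApprox (X : Set C) {x d : C} (f : x ⟶ d) : Prop :=
  IsRightApprox X f ∧ RightMinimal f

def IsMinimalLeftApprox (X : Set C) {d x : C} (f : d ⟶ x) : Prop :=
  IsLeftApprox X f ∧ LeftMinimal f

def ContravariantlyFinite (X : Set C) : Prop :=
  ∀ d : C, ∃ (x : C) (f : x ⟶ d), IsRightApprox X f

def CovariantlyFinite (X : Set C) : Prop :=
  ∀ d : C, ∃ (x : C) (f : d ⟶ x), IsLeftApprox X f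

def FunctoriallyFinite (X : Set C) : Prop :=
  ContravariantlyFinite X ∧ CovariantlyFinite X

/-- `X * Y`: objects arising as extensions of an object of `Y` by an object of `X`. -/
def extStar (X Y : Set C) : Set C :=
  {d | ∃ (x y : C) (f : x ⟶ d) (g : d ⟶ y) (h : y ⟶ x⟦(1 : ℤ)⟧),
    (Triangle.mk f g h ∈ distTriang C) ∧ x ∈ X ∧ y ∈ Y}

def ExtClosed (X : Set C) : Prop := extStar X X ⊆ X

/-- extension closure: smallest extension-closed subcategory containing `X`. -/
def extClosure (X : Set C) : Set C := ⋂₀ {T : Set C | X ⊆ T ∧ ExtClosed T}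

/-- closure under direct summands. -/
def sumClosure (X : Set C) : Set C :=
  {d | ∃ x ∈ X, ∃ (i : d ⟶ x) (r : x ⟶ d), i ≫ r = 𝟙 d}

/-- `Sn S n` is `(S)_{n+1}` of the paper: `(S)_1 = S`, `(S)_{n+1} = (S * (S)_n)^⊕`. -/
def Sn (S : Set C) : ℕ → Set C
  | 0 => S
  | n + 1 => sumClosure (extStar S (Sn S n))

def shiftSet (i : ℤ) (S : Set C) : Set C :=
  {d | ∃ s ∈ S, Nonempty (d ≅ s⟦i⟧)}

/-- `S ∪ Σ⁻¹S ∪ ⋯ ∪ Σ^{1-w}S`. -/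
def shiftUnion (w : ℕ) (S : Set C) : Set C :=
  {d | ∃ i : ℕ, i < w ∧ d ∈ shiftSet (-(i : ℤ)) S}

/-- `starChain S n = ⟨S⟩ * Σ⁻¹⟨S⟩ * ⋯ * Σ^{-n}⟨S⟩`. -/
def starChain (S : Set C) : ℕ → Set C
  | 0 => extClosure S
  | n + 1 => extStar (starChain S n) (shiftSet (-((n : ℤ) + 1)) (extClosure S))

def rightPerp (S : Set C) : Set C := {d | ∀ s ∈ S, ∀ f : s ⟶ d, f = 0}

def leftPerp (S : Set C) : Set C := {d | ∀ s ∈ S, ∀ f : d ⟶ s, f = 0}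

/-- `S^{⊥_w} = {d : Hom(Σ^i S, d) = 0 for 0 ≤ i ≤ w}`. -/
def perpW (w : ℕ) (S : Set C) : Set C :=
  {d | ∀ i : ℕ, i ≤ w → ∀ s ∈ S, ∀ f : s⟦(i : ℤ)⟧ ⟶ d, f = 0}

/-- `^{⊥_w}S = {d : Hom(d, Σ^{-i} S) = 0 for 0 ≤ i ≤ w}`. -/
def wPerp (w : ℕ) (S : Set C) : Set C :=
  {d | ∀ i : ℕ, i ≤ w → ∀ s ∈ S, ∀ f : d ⟶ s⟦(-(i : ℤ))⟧, f = 0}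

def Indec (x : C) : Prop :=
  ¬ IsZero x ∧ ∀ e : x ⟶ x, e ≫ e = e → e = 0 ∨ e = 𝟙 x

/-- `(X, Y)` is an `S`-mutation pair. -/
def IsMutationPair (S X Y : Set C) : Prop :=
  X = leftPerp S ∩ rightPerp S ∩ leftPerp (shiftSet (-1) S) ∩
      shiftSet (-1) (extStar (extClosure S) Y) ∧
  Y = leftPerp S ∩ rightPerp S ∩ rightPerp (shiftSet 1 S) ∩
      shiftSet 1 (extStar X (extClosure S))

/-- `r` is the right mutation of `d` with respect to `S`. -/
def IsRightMutation (S : Set C) (d r : C) : Prop :=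
  ∃ (s : C) (α : s ⟶ d⟦(1 : ℤ)⟧) (β : d⟦(1 : ℤ)⟧ ⟶ r) (γ : r ⟶ s⟦(1 : ℤ)⟧),
    (Triangle.mk α β γ ∈ distTriang C) ∧ IsMinimalRightApprox (extClosure S) α

/-- `l` is the left mutation of `d` with respect to `S`. -/
def IsLeftMutation (S : Set C) (d l : C) : Prop :=
  ∃ (s : C) (β : l ⟶ d⟦(-1 : ℤ)⟧) (α : d⟦(-1 : ℤ)⟧ ⟶ s) (γ : s ⟶ l⟦(1 : ℤ)⟧),
    (Triangle.mk β α γ ∈ distTriang C) ∧ IsMinimalLeftApprox (extClosure S) α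

/-- the extension closure of `R` computed inside the triangulated category `Z`,
whose triangles `x → z → y → x⟨1⟩` come from a cone `c` of `x → z` in `D` together
with a minimal right `⟨S⟩`-approximation triangle `s → c → y → Σs`. -/
inductive zExtClosure (S Z R : Set C) : C → Prop
  | of (r : C) (hr : r ∈ R) : zExtClosure S Z R r
  | ext (x z y c s : C) (f : x ⟶ z) (g₁ : z ⟶ c) (h₁ : c ⟶ x⟦(1 : ℤ)⟧)
      (α : s ⟶ c) (β : c ⟶ y) (γ : y ⟶ s⟦(1 : ℤ)⟧)
      (hT : Triangle.mk f g₁ h₁ ∈ distTriang C)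
      (hT' : Triangle.mk α β γ ∈ distTriang C)
      (hmin : IsMinimalRightApprox (extClosure S) α)
      (hz : z ∈ Z)
      (hx : zExtClosure S Z R x) (hy : zExtClosure S Z R y) :
      zExtClosure S Z R z

variable (k : Type u₂) [Field k] [Linear k C]

/-- orthogonal collection: `dim Hom(x, y) = δ_{x,y}`. -/
def IsOrthogonalCollection (S : Set C) : Prop :=
  (∀ x ∈ S, Module.finrank k (x ⟶ x) = 1) ∧
  ∀ x ∈ S, ∀ y ∈ S, x ≠ y → ∀ f : x ⟶ y, f = 0

/-- `w`-orthogonal collection. -/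
def IsWOrthogonal (w : ℕ) (S : Set C) : Prop :=
  IsOrthogonalCollection k S ∧
  ∀ i : ℕ, 1 ≤ i → i ≤ w - 1 → ∀ x ∈ S, ∀ y ∈ S, ∀ f : x⟦(i : ℤ)⟧ ⟶ y, f = 0

/-- `w`-simple-minded system. -/
def IsWSMS (w : ℕ) (S : Set C) : Prop :=
  IsWOrthogonal k w S ∧ ∀ d : C, d ∈ sumClosure (extClosure (shiftUnion w S))

def IsRightRiedtmann (w : ℕ) (S : Set C) : Prop :=
  IsWOrthogonal k w S ∧
  ∀ d : C, (∀ i : ℕ, i < w → ∀ s ∈ S, ∀ f : d⟦(i : ℤ)⟧ ⟶ s, f = 0) → IsZero d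

def IsLeftRiedtmann (w : ℕ) (S : Set C) : Prop :=
  IsWOrthogonal k w S ∧
  ∀ d : C, (∀ i : ℕ, i < w → ∀ s ∈ S, ∀ f : s⟦(i : ℤ)⟧ ⟶ d, f = 0) → IsZero d

/-- `S` is an `𝕊_w`-subcategory (`𝕊_w = 𝕊 Σ^{-w}`). -/
def IsSwSubcat (SD : SerreData k C) (w : ℤ) (S : Set C) : Prop :=
  ∀ x : C, x ∈ S ↔ ∃ s ∈ S, Nonempty (x ≅ SD.F.obj (s⟦-w⟧))

/-- the universal map `z → 𝕊z`, corresponding to the trace functional on `End(z)`. -/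
def IsUniversalMap (SD : SerreData k C) (z : C) (h : z ⟶ SD.F.obj z) : Prop :=
  SD.tr z h = 1 ∧ ∀ f : z ⟶ z, ¬ IsIso f → SD.tr z (f ≫ h) = 0

section Aux

variable {S : Set C}

lemma extClosure_subset {T : Set C} (h1 : S ⊆ T) (h2 : ExtClosed T) :
    extClosure S ⊆ T := fun _ hx => Set.mem_sInter.1 hx T ⟨h1, h2⟩

lemma hom_zero_to_extClosure {y : C} (h : ∀ s ∈ S, ∀ f : s ⟶ y, f = 0)
    {t : C} (ht : t ∈ extClosure S) : ∀ f : t ⟶ y, f = 0 := by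
  refine extClosure_subset (T := {t : C | ∀ f : t ⟶ y, f = 0}) h ?_ ht
  rintro d ⟨t₁, t₂, f, g, h₃, hT, h₁, h₂⟩ φ
  obtain ⟨ψ, hψ⟩ := Triangle.yoneda_exact₂ _ hT φ (h₁ (f ≫ φ))
  rw [hψ, h₂ ψ]; exact comp_zero

lemma hom_zero_from_extClosure {x : C} (h : ∀ s ∈ S, ∀ f : x ⟶ s, f = 0)
    {t : C} (ht : t ∈ extClosure S) : ∀ f : x ⟶ t, f = 0 := by
  refine extClosure_subset (T := {t : C | ∀ f : x ⟶ t, f = 0}) h ?_ ht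
  rintro d ⟨t₁, t₂, f, g, h₃, hT, h₁, h₂⟩ φ
  obtain ⟨ψ, hψ⟩ := Triangle.coyoneda_exact₂ _ hT φ (h₂ (φ ≫ g))
  rw [hψ, h₁ ψ]; exact zero_comp

lemma hom_shift_zero₁ {a b : C} (h : ∀ g : a ⟶ b⟦(-1 : ℤ)⟧, g = 0) (f : a⟦(1 : ℤ)⟧ ⟶ b) :
    f = 0 := by
  have h1 : (shiftEquiv C (1 : ℤ)).toAdjunction.homEquiv a b f = 0 := h _
  have h2 : (shiftEquiv C (1 : ℤ)).toAdjunction.homEquiv a b 0 = 0 := by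
    simp [Adjunction.homEquiv_apply]
  exact ((shiftEquiv C (1 : ℤ)).toAdjunction.homEquiv a b).injective (h1.trans h2.symm)

lemma hom_shift_zero₂ {a b : C} (h : ∀ g : a⟦(1 : ℤ)⟧ ⟶ b, g = 0) (f : a ⟶ b⟦(-1 : ℤ)⟧) :
    f = 0 := by
  have h1 : ((shiftEquiv C (1 : ℤ)).toAdjunction.homEquiv a b).symm f = 0 := h _
  have h2 := (Equiv.apply_symm_apply ((shiftEquiv C (1 : ℤ)).toAdjunction.homEquiv a b) f).symm
  rw [h1] at h2
  rw [h2]; simp [Adjunction.homEquiv_apply]; rfl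

lemma hom_shift_zero₁₁ {a b : C} (h : ∀ g : a ⟶ b, g = 0) (f : a⟦(1 : ℤ)⟧ ⟶ b⟦(1 : ℤ)⟧) :
    f = 0 := by
  obtain ⟨g, rfl⟩ := (shiftFunctor C (1 : ℤ)).map_surjective f
  rw [h g, Functor.map_zero]

lemma dist_replace₁ (T : Triangle C) (hT : T ∈ distTriang C) {z : C} (e : z ≅ T.obj₁) :
    Triangle.mk (e.hom ≫ T.mor₁) T.mor₂ (T.mor₃ ≫ (e.inv⟦(1 : ℤ)⟧')) ∈ distTriang C := by
  refine isomorphic_distinguished _ hT _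
    (Triangle.isoMk _ _ e (Iso.refl _) (Iso.refl _) ?_ ?_ ?_)
  · exact Category.comp_id _
  · exact (Category.comp_id _).trans (Category.id_comp _).symm
  · change (T.mor₃ ≫ e.inv⟦(1 : ℤ)⟧') ≫ e.hom⟦(1 : ℤ)⟧' = 𝟙 T.obj₃ ≫ T.mor₃
    rw [Category.assoc, ← Functor.map_comp, e.inv_hom_id, CategoryTheory.Functor.map_id, Category.comp_id, Category.id_comp]

lemma dist_replace₂ (T : Triangle C) (hT : T ∈ distTriang C) {z : C} (e : z ≅ T.obj₂) :
    Triangle.mk (T.mor₁ ≫ e.inv) (e.hom ≫ T.mor₂) T.mor₃ ∈ distTriang C := by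
  refine isomorphic_distinguished _ hT _
    (Triangle.isoMk _ _ (Iso.refl _) e (Iso.refl _) ?_ ?_ ?_)
  · change (T.mor₁ ≫ e.inv) ≫ e.hom = 𝟙 T.obj₁ ≫ T.mor₁; simp
  · exact Category.comp_id _
  · change T.mor₃ ≫ (𝟙 T.obj₁)⟦(1 : ℤ)⟧' = 𝟙 T.obj₃ ≫ T.mor₃
    rw [CategoryTheory.Functor.map_id, Category.comp_id, Category.id_comp]

lemma dist_replace₃ (T : Triangle C) (hT : T ∈ distTriang C) {z : C} (e : z ≅ T.obj₃) :
    Triangle.mk T.mor₁ (T.mor₂ ≫ e.inv) (e.hom ≫ T.mor₃) ∈ distTriang C := by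
  refine isomorphic_distinguished _ hT _
    (Triangle.isoMk _ _ (Iso.refl _) (Iso.refl _) e ?_ ?_ ?_)
  · exact (Category.comp_id _).trans (Category.id_comp _).symm
  · change (T.mor₂ ≫ e.inv) ≫ e.hom = 𝟙 T.obj₂ ≫ T.mor₂; simp
  · change (e.hom ≫ T.mor₃) ≫ (𝟙 T.obj₁)⟦(1 : ℤ)⟧' = e.hom ≫ T.mor₃; simp

lemma isMinimalRightApprox_of_perp {s a y : C} {α : s ⟶ a} {β : a ⟶ y} {γ : y ⟶ s⟦(1 : ℤ)⟧}
    (hT : Triangle.mk α β γ ∈ distTriang C) (hs : s ∈ extClosure S)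
    (hy : ∀ t ∈ extClosure S, ∀ φ : t ⟶ y, φ = 0)
    (hy1 : ∀ t ∈ extClosure S, ∀ φ : t ⟶ y⟦(-1 : ℤ)⟧, φ = 0) :
    IsMinimalRightApprox (extClosure S) α := by
  constructor
  · refine ⟨hs, fun t ht g => ?_⟩
    obtain ⟨h₀, hh⟩ := Triangle.coyoneda_exact₂ _ hT g (hy t ht (g ≫ β))
    exact ⟨h₀, hh.symm⟩
  · intro g hg
    have h0 : (𝟙 s - g) ≫ α = 0 := by
      rw [Preadditive.sub_comp, hg, Category.id_comp, sub_self]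
    obtain ⟨u, hu⟩ := Triangle.coyoneda_exact₂ _ (inv_rot_of_distTriang _ hT) (𝟙 s - g) h0
    have hu0 : u = 0 := hy1 s hs u
    have hsub : 𝟙 s - g = 0 := by rw [hu, hu0]; exact zero_comp
    have hg1 : g = 𝟙 s := (sub_eq_zero.mp hsub).symm
    rw [hg1]; infer_instance

lemma isMinimalLeftApprox_of_perp {x b s : C} {β : x ⟶ b} {α : b ⟶ s} {γ : s ⟶ x⟦(1 : ℤ)⟧}
    (hT : Triangle.mk β α γ ∈ distTriang C) (hs : s ∈ extClosure S)
    (hx : ∀ t ∈ extClosure S, ∀ φ : x ⟶ t, φ = 0)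
    (hx1 : ∀ t ∈ extClosure S, ∀ φ : x⟦(1 : ℤ)⟧ ⟶ t, φ = 0) :
    IsMinimalLeftApprox (extClosure S) α := by
  constructor
  · refine ⟨hs, fun t ht g => ?_⟩
    obtain ⟨v, hv⟩ := Triangle.yoneda_exact₂ _ hT g (hx t ht (β ≫ g))
    exact ⟨v, hv.symm⟩
  · intro g hg
    have h0 : α ≫ (𝟙 s - g) = 0 := by
      rw [Preadditive.comp_sub, hg, Category.comp_id, sub_self]
    obtain ⟨ρ, hρ⟩ := Triangle.yoneda_exact₂ _ (rot_of_distTriang _ hT) (𝟙 s - g) h0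
    have hρ0 : ρ = 0 := hx1 s hs ρ
    have hsub : 𝟙 s - g = 0 := by rw [hρ, hρ0]; exact comp_zero
    have hg1 : g = 𝟙 s := (sub_eq_zero.mp hsub).symm
    rw [hg1]; infer_instance

lemma isIso_of_comp_both {a b : C} {h : a ⟶ b} {h' : b ⟶ a}
    (i1 : IsIso (h ≫ h')) (i2 : IsIso (h' ≫ h)) : IsIso h := by
  have hr : h ≫ (h' ≫ inv (h ≫ h')) = 𝟙 a := by
    rw [← Category.assoc, IsIso.hom_inv_id]
  have ht : (inv (h' ≫ h) ≫ h') ≫ h = 𝟙 b := by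
    rw [Category.assoc, IsIso.inv_hom_id]
  have htr : inv (h' ≫ h) ≫ h' = h' ≫ inv (h ≫ h') := by
    calc inv (h' ≫ h) ≫ h' = (inv (h' ≫ h) ≫ h') ≫ 𝟙 a := by rw [Category.comp_id]
      _ = (inv (h' ≫ h) ≫ h') ≫ h ≫ (h' ≫ inv (h ≫ h')) := by rw [hr]
      _ = ((inv (h' ≫ h) ≫ h') ≫ h) ≫ (h' ≫ inv (h ≫ h')) := by simp only [Category.assoc]
      _ = h' ≫ inv (h ≫ h') := by rw [ht, Category.id_comp]
  exact ⟨h' ≫ inv (h ≫ h'), hr, by rw [← htr]; exact ht⟩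

lemma iso_of_minimal_right {s s' a y y' : C} {α : s ⟶ a} {β : a ⟶ y} {γ : y ⟶ s⟦(1 : ℤ)⟧}
    {α' : s' ⟶ a} {β' : a ⟶ y'} {γ' : y' ⟶ s'⟦(1 : ℤ)⟧}
    (hT : Triangle.mk α β γ ∈ distTriang C) (hT' : Triangle.mk α' β' γ' ∈ distTriang C)
    (hm : IsMinimalRightApprox (extClosure S) α)
    (hm' : IsMinimalRightApprox (extClosure S) α') :
    Nonempty (y ≅ y') := by
  obtain ⟨h, hh⟩ := hm'.1.2 s hm.1.1 α
  obtain ⟨h', hh'⟩ := hm.1.2 s' hm'.1.1 α'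
  have i1 : IsIso (h ≫ h') := hm.2 _ (by rw [Category.assoc, hh', hh])
  have i2 : IsIso (h' ≫ h) := hm'.2 _ (by rw [Category.assoc, hh, hh'])
  have ih : IsIso h := isIso_of_comp_both i1 i2
  obtain ⟨c, hc1, hc2⟩ := complete_distinguished_triangle_morphism _ _ hT hT' h (𝟙 a)
    (by exact (Category.comp_id _).trans hh.symm)
  have : IsIso c := by
    refine isIso₃_of_isIso₁₂ (Triangle.homMk _ _ h (𝟙 a) c
      (by exact (Category.comp_id _).trans hh.symm) hc1 hc2) hT hT' ?_ ?_
    · exact ih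
    · change IsIso (𝟙 a); infer_instance
  exact ⟨@asIso _ _ _ _ c this⟩

lemma iso_of_minimal_left {x x' b s s' : C} {β : x ⟶ b} {α : b ⟶ s} {γ : s ⟶ x⟦(1 : ℤ)⟧}
    {β' : x' ⟶ b} {α' : b ⟶ s'} {γ' : s' ⟶ x'⟦(1 : ℤ)⟧}
    (hT : Triangle.mk β α γ ∈ distTriang C) (hT' : Triangle.mk β' α' γ' ∈ distTriang C)
    (hm : IsMinimalLeftApprox (extClosure S) α)
    (hm' : IsMinimalLeftApprox (extClosure S) α') :
    Nonempty (x ≅ x') := by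
  obtain ⟨h, hh⟩ := hm.1.2 s' hm'.1.1 α'
  obtain ⟨h', hh'⟩ := hm'.1.2 s hm.1.1 α
  have i1 : IsIso (h ≫ h') := hm.2 _ (by rw [← Category.assoc, hh, hh'])
  have i2 : IsIso (h' ≫ h) := hm'.2 _ (by rw [← Category.assoc, hh', hh])
  have ih : IsIso h := isIso_of_comp_both i1 i2
  obtain ⟨c, hc1, hc2⟩ := complete_distinguished_triangle_morphism _ _
    (rot_of_distTriang _ hT) (rot_of_distTriang _ hT') (𝟙 b) h
    (by exact hh.trans (Category.id_comp _).symm)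
  have : IsIso c := by
    refine isIso₃_of_isIso₁₂ (Triangle.homMk _ _ (𝟙 b) h c
      (by exact hh.trans (Category.id_comp _).symm) hc1 hc2)
      (rot_of_distTriang _ hT) (rot_of_distTriang _ hT') ?_ ?_
    · change IsIso (𝟙 b); infer_instance
    · exact ih
  exact ⟨(shiftFunctor C (1 : ℤ)).preimageIso (@asIso _ _ _ _ c this)⟩

lemma leftPerp_iso {W : Set C} {a b : C} (h : a ∈ leftPerp W) (e : b ≅ a) :
    b ∈ leftPerp W := fun s hs f => by
  have h0 := h s hs (e.inv ≫ f)
  calc f = e.hom ≫ e.inv ≫ f := by simp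
    _ = 0 := by rw [h0, comp_zero]

lemma rightPerp_iso {W : Set C} {a b : C} (h : a ∈ rightPerp W) (e : b ≅ a) :
    b ∈ rightPerp W := fun s hs f => by
  have h0 := h s hs (f ≫ e.hom)
  calc f = (f ≫ e.hom) ≫ e.inv := by simp
    _ = 0 := by rw [h0, zero_comp]

lemma shiftSet_iso {i : ℤ} {W : Set C} {a b : C} (h : a ∈ shiftSet i W) (e : b ≅ a) :
    b ∈ shiftSet i W := by
  obtain ⟨s, hs, ⟨e₂⟩⟩ := h
  exact ⟨s, hs, ⟨e.trans e₂⟩⟩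

variable {X Y : Set C}

lemma mem_X_iso (hXY : IsMutationPair S X Y) {x x' : C} (hx : x ∈ X) (e : x' ≅ x) :
    x' ∈ X := by
  rw [hXY.1] at hx ⊢
  exact ⟨⟨⟨leftPerp_iso hx.1.1.1 e, rightPerp_iso hx.1.1.2 e⟩, leftPerp_iso hx.1.2 e⟩,
    shiftSet_iso hx.2 e⟩

lemma mem_Y_iso (hXY : IsMutationPair S X Y) {y y' : C} (hy : y ∈ Y) (e : y' ≅ y) :
    y' ∈ Y := by
  rw [hXY.2] at hy ⊢
  exact ⟨⟨⟨leftPerp_iso hy.1.1.1 e, rightPerp_iso hy.1.1.2 e⟩, rightPerp_iso hy.1.2 e⟩,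
    shiftSet_iso hy.2 e⟩

lemma Yperp_r (hXY : IsMutationPair S X Y) {y : C} (hy : y ∈ Y) :
    ∀ t ∈ extClosure S, ∀ φ : t ⟶ y, φ = 0 := by
  rw [hXY.2] at hy
  exact fun t ht => hom_zero_to_extClosure (fun s₀ hs₀ => hy.1.1.2 s₀ hs₀) ht

lemma Yperp_r1 (hXY : IsMutationPair S X Y) {y : C} (hy : y ∈ Y) :
    ∀ t ∈ extClosure S, ∀ φ : t ⟶ y⟦(-1 : ℤ)⟧, φ = 0 := by
  rw [hXY.2] at hy
  refine fun t ht => hom_zero_to_extClosure (fun s₀ hs₀ φ => ?_) ht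
  exact hom_shift_zero₂ (fun u => hy.1.2 (s₀⟦(1 : ℤ)⟧) ⟨s₀, hs₀, ⟨Iso.refl _⟩⟩ u) φ

lemma Xperp_l (hXY : IsMutationPair S X Y) {x : C} (hx : x ∈ X) :
    ∀ t ∈ extClosure S, ∀ φ : x ⟶ t, φ = 0 := by
  rw [hXY.1] at hx
  exact fun t ht => hom_zero_from_extClosure (fun s₀ hs₀ => hx.1.1.1 s₀ hs₀) ht

lemma Xperp_l1 (hXY : IsMutationPair S X Y) {x : C} (hx : x ∈ X) :
    ∀ t ∈ extClosure S, ∀ φ : x⟦(1 : ℤ)⟧ ⟶ t, φ = 0 := by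
  have hx' := hx
  rw [hXY.1] at hx'
  refine fun t ht => hom_zero_from_extClosure (fun s₀ hs₀ φ => ?_) ht
  exact hom_shift_zero₁ (fun u => hx'.1.2 (s₀⟦(-1 : ℤ)⟧) ⟨s₀, hs₀, ⟨Iso.refl _⟩⟩ u) φ

lemma canonical_right (hXY : IsMutationPair S X Y) {x : C} (hx : x ∈ X) :
    ∃ (s y : C) (α : s ⟶ x⟦(1 : ℤ)⟧) (β : x⟦(1 : ℤ)⟧ ⟶ y) (γ : y ⟶ s⟦(1 : ℤ)⟧),
      y ∈ Y ∧ s ∈ extClosure S ∧ (Triangle.mk α β γ ∈ distTriang C) ∧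
      IsMinimalRightApprox (extClosure S) α := by
  have hx' := hx
  rw [hXY.1] at hx'
  obtain ⟨d, hd, ⟨e⟩⟩ := hx'.2
  obtain ⟨s, y, f, g, h, hT, hs, hy⟩ := hd
  let ι : x⟦(1 : ℤ)⟧ ≅ d :=
    (shiftFunctor C (1 : ℤ)).mapIso e ≪≫ (shiftEquiv C (1 : ℤ)).counitIso.app d
  have hT'' := dist_replace₂ _ hT ι
  exact ⟨s, y, f ≫ ι.inv, ι.hom ≫ g, h, hy, hs, hT'',
    isMinimalRightApprox_of_perp hT'' hs (Yperp_r hXY hy) (Yperp_r1 hXY hy)⟩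

lemma canonical_left_of_memX (hXY : IsMutationPair S X Y) {x : C} (hx : x ∈ X) :
    ∃ (s y : C) (β : x ⟶ y⟦(-1 : ℤ)⟧) (α : y⟦(-1 : ℤ)⟧ ⟶ s) (γ : s ⟶ x⟦(1 : ℤ)⟧),
      y ∈ Y ∧ s ∈ extClosure S ∧ (Triangle.mk β α γ ∈ distTriang C) ∧
      IsMinimalLeftApprox (extClosure S) α := by
  have hx' := hx
  rw [hXY.1] at hx'
  obtain ⟨d, hd, ⟨e⟩⟩ := hx'.2
  obtain ⟨s, y, f, g, h, hT, hs, hy⟩ := hd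
  have hU := inv_rot_of_distTriang _ (inv_rot_of_distTriang _ hT)
  have hT'' := dist_replace₁ _ hU (e : x ≅ ((Triangle.mk f g h).invRotate.invRotate).obj₁)
  exact ⟨s, y, e.hom ≫ (Triangle.mk f g h).invRotate.invRotate.mor₁,
    (Triangle.mk f g h).invRotate.invRotate.mor₂,
    (Triangle.mk f g h).invRotate.invRotate.mor₃ ≫ (e.inv⟦(1 : ℤ)⟧'), hy, hs, hT'',
    isMinimalLeftApprox_of_perp hT'' hs (Xperp_l hXY hx) (Xperp_l1 hXY hx)⟩

lemma canonical_right_of_memY (hXY : IsMutationPair S X Y) {y : C} (hy : y ∈ Y) :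
    ∃ (s x : C) (α : s ⟶ x⟦(1 : ℤ)⟧) (β : x⟦(1 : ℤ)⟧ ⟶ y) (γ : y ⟶ s⟦(1 : ℤ)⟧),
      x ∈ X ∧ s ∈ extClosure S ∧ (Triangle.mk α β γ ∈ distTriang C) ∧
      IsMinimalRightApprox (extClosure S) α := by
  have hy' := hy
  rw [hXY.2] at hy'
  obtain ⟨d, hd, ⟨e⟩⟩ := hy'.2
  obtain ⟨x, s, f, g, h, hT, hx, hs⟩ := hd
  have hU := rot_of_distTriang _ (rot_of_distTriang _ hT)
  have hT'' := dist_replace₃ _ hU (e : y ≅ ((Triangle.mk f g h).rotate.rotate).obj₃)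
  exact ⟨s, x, (Triangle.mk f g h).rotate.rotate.mor₁,
    (Triangle.mk f g h).rotate.rotate.mor₂ ≫ e.inv,
    e.hom ≫ (Triangle.mk f g h).rotate.rotate.mor₃, hx, hs, hT'',
    isMinimalRightApprox_of_perp hT'' hs (Yperp_r hXY hy) (Yperp_r1 hXY hy)⟩

lemma canonical_left (hXY : IsMutationPair S X Y) {y : C} (hy : y ∈ Y) :
    ∃ (s x : C) (β : x ⟶ y⟦(-1 : ℤ)⟧) (α : y⟦(-1 : ℤ)⟧ ⟶ s) (γ : s ⟶ x⟦(1 : ℤ)⟧),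
      x ∈ X ∧ s ∈ extClosure S ∧ (Triangle.mk β α γ ∈ distTriang C) ∧
      IsMinimalLeftApprox (extClosure S) α := by
  have hy' := hy
  rw [hXY.2] at hy'
  obtain ⟨d, hd, ⟨e⟩⟩ := hy'.2
  obtain ⟨x, s, f, g, h, hT, hx, hs⟩ := hd
  let ι : y⟦(-1 : ℤ)⟧ ≅ d :=
    (shiftFunctor C (-1 : ℤ)).mapIso e ≪≫ ((shiftEquiv C (1 : ℤ)).unitIso.app d).symm
  have hT'' := dist_replace₂ _ hT ι
  exact ⟨s, x, f ≫ ι.inv, ι.hom ≫ g, h, hx, hs, hT'',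
    isMinimalLeftApprox_of_perp hT'' hs (Xperp_l hXY hx) (Xperp_l1 hXY hx)⟩

end Aux

/-- For an `S`-mutation pair `(X, Y)` (with `S` orthogonal, `⟨S⟩` functorially finite,
and `S` an `𝕊₋₁`-subcategory or `Hom(ΣS, S) = 0`): `Y = R(X)`, `X = L(Y)`, and there is
an equivalence of categories `X ≃ Y`. -/
theorem stmt14 (S : Set C) (hS : IsOrthogonalCollection k S)
    (hff : FunctoriallyFinite (extClosure S))
    (hcond : (∃ SD : SerreData k C, IsSwSubcat k SD (-1) S) ∨
      (∀ x ∈ S, ∀ y ∈ S, ∀ f : x⟦(1 : ℤ)⟧ ⟶ y, f = 0))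
    (X Y : Set C) (hXY : IsMutationPair S X Y) :
    Y = {y | ∃ x ∈ X, IsRightMutation S x y} ∧
    X = {x | ∃ y ∈ Y, IsLeftMutation S y x} ∧
    Nonempty (ObjectProperty.FullSubcategory (· ∈ X) ≌ ObjectProperty.FullSubcategory (· ∈ Y)) := by
  classical
  refine ⟨?_, ?_, ?_⟩
  · ext y
    constructor
    · intro hy
      obtain ⟨s, x, α, β, γ, hx, hs, hT, hmin⟩ := canonical_right_of_memY hXY hy
      exact ⟨x, hx, s, α, β, γ, hT, hmin⟩
    · rintro ⟨x, hx, s, α, β, γ, hT, hmin⟩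
      obtain ⟨s₂, y₂, α₂, β₂, γ₂, hy₂, hs₂, hT₂, hmin₂⟩ := canonical_right hXY hx
      obtain ⟨e⟩ := iso_of_minimal_right hT₂ hT hmin₂ hmin
      exact mem_Y_iso hXY hy₂ e.symm
  · ext x
    constructor
    · intro hx
      obtain ⟨s, y, β, α, γ, hy, hs, hT, hmin⟩ := canonical_left_of_memX hXY hx
      exact ⟨y, hy, s, β, α, γ, hT, hmin⟩
    · rintro ⟨y, hy, s, β, α, γ, hT, hmin⟩
      obtain ⟨s₂, x₂, β₂, α₂, γ₂, hx₂, hs₂, hT₂, hmin₂⟩ := canonical_left hXY hy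
      obtain ⟨e⟩ := iso_of_minimal_left hT₂ hT hmin₂ hmin
      exact mem_X_iso hXY hx₂ e.symm
  · choose sF yF αF βF γF hYF hsF hTF hminF using
      fun (p : ObjectProperty.FullSubcategory (· ∈ X)) => canonical_right hXY p.2
    have uniq : ∀ (p q : ObjectProperty.FullSubcategory (· ∈ X)) (g g' : yF p ⟶ yF q),
        βF p ≫ g = βF p ≫ g' → g = g' := by
      intro p q g g' hgg
      have h0 : βF p ≫ (g - g') = 0 := by rw [Preadditive.comp_sub, hgg, sub_self]
      obtain ⟨ρ, hρ⟩ := Triangle.yoneda_exact₂ _ (rot_of_distTriang _ (hTF p)) (g - g') h0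
      have hρ0 : ρ = 0 :=
        hom_shift_zero₁ (fun u => Yperp_r1 hXY (hYF q) (sF p) (hsF p) u) ρ
      have hsub : g - g' = 0 := by rw [hρ, hρ0]; exact comp_zero
      exact sub_eq_zero.mp hsub
    have exm : ∀ (p q : ObjectProperty.FullSubcategory (· ∈ X)) (f : p.obj ⟶ q.obj),
        ∃ g : yF p ⟶ yF q, βF p ≫ g = f⟦(1 : ℤ)⟧' ≫ βF q := by
      intro p q f
      have h0 : αF p ≫ (f⟦(1 : ℤ)⟧' ≫ βF q) = 0 := Yperp_r hXY (hYF q) (sF p) (hsF p) _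
      obtain ⟨g, hg⟩ := Triangle.yoneda_exact₂ _ (hTF p) (f⟦(1 : ℤ)⟧' ≫ βF q) h0
      exact ⟨g, hg.symm⟩
    choose Gm hGm using exm
    let G : ObjectProperty.FullSubcategory (· ∈ X) ⥤ ObjectProperty.FullSubcategory (· ∈ Y) :=
      { obj := fun p => ⟨yF p, hYF p⟩
        map := fun {p q} f => ObjectProperty.homMk (Gm p q f.hom)
        map_id := fun p => by
          refine ObjectProperty.hom_ext _ (uniq p p _ _ ?_)
          change βF p ≫ Gm p p (𝟙 p.obj) = βF p ≫ 𝟙 (yF p)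
          rw [hGm]
          rw [CategoryTheory.Functor.map_id, Category.id_comp, Category.comp_id]
        map_comp := fun {p q r} f f' => by
          refine ObjectProperty.hom_ext _ (uniq p r _ _ ?_)
          change βF p ≫ Gm p r (f.hom ≫ f'.hom) = βF p ≫ Gm p q f.hom ≫ Gm q r f'.hom
          rw [hGm p r (f.hom ≫ f'.hom), CategoryTheory.Functor.map_comp, Category.assoc,
            ← hGm q r f'.hom, ← Category.assoc, ← hGm p q f.hom, Category.assoc] }
    haveI : G.Faithful := by
      refine ⟨?_⟩
      intro p q f f' hff
      have hff' : Gm p q f.hom = Gm p q f'.hom := congrArg (fun m => m.hom) hff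
      have h1 : ((shiftFunctor C (1 : ℤ)).map (show p.obj ⟶ q.obj from f.hom) -
          (shiftFunctor C (1 : ℤ)).map (show p.obj ⟶ q.obj from f'.hom)) ≫ βF q = 0 := by
        rw [Preadditive.sub_comp, ← hGm p q f.hom, ← hGm p q f'.hom, hff', sub_self]
      obtain ⟨v, hv⟩ := Triangle.coyoneda_exact₂ _ (hTF q) _ h1
      have hv0 : v = 0 := Xperp_l1 hXY p.2 (sF q) (hsF q) v
      have h2 : (shiftFunctor C (1 : ℤ)).map (show p.obj ⟶ q.obj from f.hom) =
          (shiftFunctor C (1 : ℤ)).map (show p.obj ⟶ q.obj from f'.hom) := by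
        have h3 : (shiftFunctor C (1 : ℤ)).map (show p.obj ⟶ q.obj from f.hom) -
            (shiftFunctor C (1 : ℤ)).map (show p.obj ⟶ q.obj from f'.hom) = 0 := by
          rw [hv, hv0]; exact zero_comp
        exact sub_eq_zero.mp h3
      exact ObjectProperty.hom_ext _ ((shiftFunctor C (1 : ℤ)).map_injective h2)
    haveI : G.Full := by
      refine ⟨?_⟩
      intro p q g
      let g₀ : yF p ⟶ yF q := g.hom
      have h1 : (βF p ≫ g₀) ≫ γF q = 0 := by
        refine hom_shift_zero₁₁ (fun u => Xperp_l hXY p.2 (sF q) (hsF q) u) _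
      obtain ⟨w, hw⟩ := Triangle.coyoneda_exact₂ _ (rot_of_distTriang _ (hTF q))
        (βF p ≫ g₀) h1
      obtain ⟨f, hf⟩ := (shiftFunctor C (1 : ℤ)).map_surjective w
      refine ⟨ObjectProperty.homMk f, ObjectProperty.hom_ext _ ?_⟩
      show Gm p q f = g₀
      exact uniq p q _ _ (by rw [hGm, hf]; exact hw.symm)
    haveI : G.EssSurj := by
      refine ⟨?_⟩
      intro q
      obtain ⟨s, x, α, β, γ, hx, hs, hT, hmin⟩ := canonical_right_of_memY hXY q.2
      obtain ⟨e⟩ := iso_of_minimal_right (hTF ⟨x, hx⟩) hT (hminF ⟨x, hx⟩) hmin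
      exact ⟨⟨x, hx⟩, ⟨ObjectProperty.isoMk _ e⟩⟩
    haveI : G.IsEquivalence := {}
    exact ⟨G.asEquivalence⟩

end SMSPaper
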